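/- Let f : ℝ → ℝ be measurable, log-concave, and integrable on (z, ∞) for every z ∈ ℝ. Define G(z) = ∫_{(z,∞)} f(s) ds (integral with respect to Lebesgue measure). Then G is log-concave, i.e. G((1−t)·x + t·y) ≥ G(x)^{1−t} · G(y)^t for all x, y ∈ ℝ and t ∈ [0,1]. -/

import Mathlib

open MeasureTheory Set

namespace Stmt2Aux

variable {f : ℝ → ℝ}

/-- Pointwise four-point inequality for log-concave functions. -/
lemma four_point (hnonneg : ∀ x, 0 ≤ f x)
    (hlc : ∀ x y t : ℝ, 0 ≤ t → t ≤ 1 →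
      f x ^ (1 - t) * f y ^ t ≤ f ((1 - t) * x + t * y))
    {u w Δ : ℝ} (huw : u ≤ w) (hΔ : 0 ≤ Δ) :
    f u * f (w + Δ) ≤ f (u + Δ) * f w := by
  rcases eq_or_lt_of_le (by linarith : u ≤ w + Δ) with he | hlt
  · have hΔ0 : Δ = 0 := by
      have : w ≤ u := by linarith
      have : u = w := le_antisymm huw this
      linarith
    subst hΔ0
    simp [mul_comm]
  by_cases hfu : f u = 0
  · rw [hfu, zero_mul]
    exact mul_nonneg (hnonneg _) (hnonneg _)
  by_cases hfw : f (w + Δ) = 0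
  · rw [hfw, mul_zero]
    exact mul_nonneg (hnonneg _) (hnonneg _)
  have hu : 0 < f u := lt_of_le_of_ne (hnonneg u) (Ne.symm hfu)
  have hw' : 0 < f (w + Δ) := lt_of_le_of_ne (hnonneg _) (Ne.symm hfw)
  have hd : 0 < w + Δ - u := by linarith
  set s : ℝ := Δ / (w + Δ - u) with hs_def
  have hs0 : 0 ≤ s := div_nonneg hΔ hd.le
  have hs1 : s ≤ 1 := (div_le_one hd).mpr (by linarith)
  have hsmul : s * (w + Δ - u) = Δ := div_mul_cancel₀ Δ hd.ne'
  have h1 := hlc u (w + Δ) s hs0 hs1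
  have h2 := hlc u (w + Δ) (1 - s) (by linarith) (by linarith)
  rw [show (1 : ℝ) - (1 - s) = s by ring] at h2
  rw [show (1 - s) * u + s * (w + Δ) = u + Δ by linear_combination hsmul] at h1
  rw [show s * u + (1 - s) * (w + Δ) = w by linear_combination -hsmul] at h2
  calc f u * f (w + Δ)
      = (f u ^ (1 - s) * f (w + Δ) ^ s) * (f u ^ s * f (w + Δ) ^ (1 - s)) := by
        rw [mul_mul_mul_comm, ← Real.rpow_add hu, ← Real.rpow_add hw',
          show (1 - s) + s = (1 : ℝ) by ring, show s + (1 - s) = (1 : ℝ) by ring,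
          Real.rpow_one, Real.rpow_one]
    _ ≤ f (u + Δ) * f w := by
        apply mul_le_mul h1 h2 (by positivity) (hnonneg _)

lemma shift_integral (g : ℝ → ℝ) (Δ : ℝ) (s : Set ℝ) :
    ∫ x in (fun x => x + Δ) ⁻¹' s, g (x + Δ) = ∫ x in s, g x :=
  (measurePreserving_add_right volume Δ).setIntegral_preimage_emb
    (measurableEmbedding_addRight Δ) g s

lemma preimage_Ioi (Δ a : ℝ) : (fun x => x + Δ) ⁻¹' (Ioi (a + Δ)) = Ioi a := by
  ext x
  simp only [mem_preimage, mem_Ioi]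
  constructor <;> intro h <;> linarith

lemma preimage_Ioc (Δ a b : ℝ) :
    (fun x => x + Δ) ⁻¹' (Ioc (a + Δ) (b + Δ)) = Ioc a b := by
  ext x
  simp only [mem_preimage, mem_Ioc]
  exact ⟨fun h => ⟨by linarith [h.1], by linarith [h.2]⟩,
    fun h => ⟨by linarith [h.1], by linarith [h.2]⟩⟩

lemma integral_Ioi_shift (g : ℝ → ℝ) (Δ a : ℝ) :
    ∫ x in Ioi a, g (x + Δ) = ∫ x in Ioi (a + Δ), g x := by
  rw [← preimage_Ioi Δ a, shift_integral]

lemma integral_Ioc_shift (g : ℝ → ℝ) (Δ a b : ℝ) :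
    ∫ x in Ioc a b, g (x + Δ) = ∫ x in Ioc (a + Δ) (b + Δ), g x := by
  rw [← preimage_Ioc Δ a b, shift_integral]

lemma integrableOn_Ioi_shift {g : ℝ → ℝ} {Δ a : ℝ}
    (h : IntegrableOn g (Ioi (a + Δ))) :
    IntegrableOn (fun x => g (x + Δ)) (Ioi a) := by
  have key := ((measurePreserving_add_right volume Δ).restrict_preimage_emb
      (measurableEmbedding_addRight Δ) (Ioi (a + Δ))).integrable_comp_emb
      (measurableEmbedding_addRight Δ) (g := g)
  rw [preimage_Ioi] at key
  exact key.mpr h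

lemma integrableOn_Ioc_shift {g : ℝ → ℝ} {Δ a b : ℝ}
    (h : IntegrableOn g (Ioc (a + Δ) (b + Δ))) :
    IntegrableOn (fun x => g (x + Δ)) (Ioc a b) := by
  have key := ((measurePreserving_add_right volume Δ).restrict_preimage_emb
      (measurableEmbedding_addRight Δ) (Ioc (a + Δ) (b + Δ))).integrable_comp_emb
      (measurableEmbedding_addRight Δ) (g := g)
  rw [preimage_Ioc] at key
  exact key.mpr h

lemma split_integral (hint : ∀ z : ℝ, IntegrableOn f (Set.Ioi z))
    {a b : ℝ} (hab : a ≤ b) :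
    (∫ s in Ioi a, f s) = (∫ s in Ioc a b, f s) + ∫ s in Ioi b, f s := by
  rw [← Ioc_union_Ioi_eq_Ioi hab]
  exact setIntegral_union (Ioc_disjoint_Ioi le_rfl) measurableSet_Ioi
    ((hint a).mono_set Ioc_subset_Ioi_self) (hint b)

/-- The midpoint inequality `G a * G b ≤ G ((a+b)/2) ^ 2`. -/
lemma midpoint_ineq (hnonneg : ∀ x, 0 ≤ f x)
    (hlc : ∀ x y t : ℝ, 0 ≤ t → t ≤ 1 →
      f x ^ (1 - t) * f y ^ t ≤ f ((1 - t) * x + t * y))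
    (hint : ∀ z : ℝ, IntegrableOn f (Set.Ioi z))
    {a b : ℝ} (hab : a ≤ b) :
    (∫ s in Ioi a, f s) * (∫ s in Ioi b, f s) ≤ (∫ s in Ioi ((a + b) / 2), f s) ^ 2 := by
  set m : ℝ := (a + b) / 2 with hm
  set Δ : ℝ := (b - a) / 2 with hΔdef
  have hΔ : 0 ≤ Δ := by rw [hΔdef]; linarith
  have ham : a ≤ m := by rw [hm]; linarith
  have hmb : m ≤ b := by rw [hm]; linarith
  have hmΔ : m = a + Δ := by rw [hm, hΔdef]; ring
  have hbΔ : b = m + Δ := by rw [hm, hΔdef]; ring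
  have hIa : IntegrableOn f (Ioc a m) := (hint a).mono_set Ioc_subset_Ioi_self
  have key1 := split_integral hint ham
  have key2 := split_integral hint hmb
  -- shifted representations
  have hGb : (∫ s in Ioi b, f s) = ∫ w in Ioi m, f (w + Δ) := by
    rw [integral_Ioi_shift, ← hbΔ]
  have hIbshift : (∫ s in Ioc m b, f s) = ∫ u in Ioc a m, f (u + Δ) := by
    rw [integral_Ioc_shift, ← hmΔ, ← hbΔ]
  have hshiftIoi : IntegrableOn (fun w => f (w + Δ)) (Ioi m) := by
    apply integrableOn_Ioi_shift
    rw [← hbΔ]; exact hint b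
  have hshiftIoc : IntegrableOn (fun u => f (u + Δ)) (Ioc a m) := by
    apply integrableOn_Ioc_shift
    rw [← hmΔ, ← hbΔ]
    exact (hint m).mono_set Ioc_subset_Ioi_self
  have key3 : (∫ s in Ioc a m, f s) * (∫ s in Ioi b, f s) ≤
      (∫ s in Ioc m b, f s) * (∫ s in Ioi m, f s) := by
    rw [hGb, hIbshift, ← integral_mul_const, ← integral_mul_const]
    apply setIntegral_mono_on
    · exact hIa.mul_const _
    · exact hshiftIoc.mul_const _
    · exact measurableSet_Ioc
    · intro u hu
      calc f u * (∫ w in Ioi m, f (w + Δ))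
          = ∫ w in Ioi m, f u * f (w + Δ) := (integral_const_mul _ _).symm
        _ ≤ ∫ w in Ioi m, f (u + Δ) * f w := by
            apply setIntegral_mono_on
            · exact hshiftIoi.const_mul _
            · exact (hint m).const_mul _
            · exact measurableSet_Ioi
            · intro w hw
              exact four_point hnonneg hlc (le_trans hu.2 (le_of_lt hw)) hΔ
        _ = f (u + Δ) * ∫ w in Ioi m, f w := integral_const_mul _ _
  have hGbn : 0 ≤ ∫ s in Ioi b, f s :=
    setIntegral_nonneg measurableSet_Ioi fun s _ => hnonneg s
  have hGmn : 0 ≤ ∫ s in Ioi m, f s :=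
    setIntegral_nonneg measurableSet_Ioi fun s _ => hnonneg s
  calc (∫ s in Ioi a, f s) * (∫ s in Ioi b, f s)
      = (∫ s in Ioc a m, f s) * (∫ s in Ioi b, f s)
        + (∫ s in Ioi m, f s) * (∫ s in Ioi b, f s) := by rw [key1]; ring
    _ ≤ (∫ s in Ioc m b, f s) * (∫ s in Ioi m, f s)
        + (∫ s in Ioi m, f s) * (∫ s in Ioi b, f s) := by linarith
    _ = (∫ s in Ioi ((a + b) / 2), f s) ^ 2 := by rw [key2]; ring

/-- Midpoint concavity plus continuity gives concavity (on a segment). -/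
lemma concave_of_midpoint {φ : ℝ → ℝ} {x y : ℝ} (hxy : x ≤ y)
    (hcont : ContinuousOn φ (Icc x y))
    (hmid : ∀ a b, a ∈ Icc x y → b ∈ Icc x y → (φ a + φ b) / 2 ≤ φ ((a + b) / 2))
    {t : ℝ} (ht0 : 0 ≤ t) (ht1 : t ≤ 1) :
    (1 - t) * φ x + t * φ y ≤ φ ((1 - t) * x + t * y) := by
  set c : ℝ → ℝ := fun r => (1 - r) * x + r * y with hc
  have hmaps : MapsTo c (Icc 0 1) (Icc x y) := by
    intro r hr
    constructor
    · simp only [hc]; nlinarith [hr.1, hr.2]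
    · simp only [hc]; nlinarith [hr.1, hr.2]
  set ψ : ℝ → ℝ := fun r => φ (c r) - ((1 - r) * φ x + r * φ y) with hψ
  have hccont : Continuous c := by
    simp only [hc]; continuity
  have hψcont : ContinuousOn ψ (Icc 0 1) := by
    apply ContinuousOn.sub
    · exact hcont.comp hccont.continuousOn hmaps
    · exact (Continuous.continuousOn (by continuity))
  have hψ0 : ψ 0 = 0 := by simp [hψ, hc]
  have hψ1 : ψ 1 = 0 := by simp [hψ, hc]
  have hψmid : ∀ s u, s ∈ Icc (0:ℝ) 1 → u ∈ Icc (0:ℝ) 1 →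
      (ψ s + ψ u) / 2 ≤ ψ ((s + u) / 2) := by
    intro s u hs hu
    have h1 : c ((s + u) / 2) = (c s + c u) / 2 := by simp only [hc]; ring
    have h2 := hmid (c s) (c u) (hmaps hs) (hmaps hu)
    simp only [hψ]
    rw [h1]
    have hL : (1 - (s + u) / 2) * φ x + ((s + u) / 2) * φ y =
        (((1 - s) * φ x + s * φ y) + ((1 - u) * φ x + u * φ y)) / 2 := by ring
    linarith [h2, hL]
  by_contra hcon
  push_neg at hcon
  have hψt : ψ t < 0 := by
    simp only [hψ, hc]
    linarith
  clear_value ψ c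
  have htmem : t ∈ Icc (0:ℝ) 1 := ⟨ht0, ht1⟩
  obtain ⟨t₀, ht₀mem, ht₀min⟩ :=
    isCompact_Icc.exists_isMinOn (nonempty_Icc.mpr zero_le_one) hψcont
  have hmin : ∀ r ∈ Icc (0:ℝ) 1, ψ t₀ ≤ ψ r := fun r hr => ht₀min hr
  have hmneg : ψ t₀ < 0 := lt_of_le_of_lt (hmin t htmem) hψt
  set A : Set ℝ := Icc 0 1 ∩ ψ ⁻¹' {ψ t₀} with hA
  have hAclosed : IsClosed A :=
    hψcont.preimage_isClosed_of_isClosed isClosed_Icc isClosed_singleton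
  have hAcompact : IsCompact A :=
    isCompact_Icc.of_isClosed_subset hAclosed inter_subset_left
  have hAne : A.Nonempty := ⟨t₀, ht₀mem, rfl⟩
  obtain ⟨l, hlA, hlleast⟩ := hAcompact.exists_isLeast hAne
  have hl01 : l ∈ Icc (0:ℝ) 1 := hlA.1
  have hψl : ψ l = ψ t₀ := hlA.2
  have hl0 : 0 < l := by
    rcases eq_or_lt_of_le hl01.1 with h | h
    · exfalso; rw [← h] at hψl; rw [hψ0] at hψl; linarith
    · exact h
  have hl1 : l < 1 := by
    rcases eq_or_lt_of_le hl01.2 with h | h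
    · exfalso; rw [h] at hψl; rw [hψ1] at hψl; linarith
    · exact h
  set d : ℝ := min l (1 - l) with hd
  have hdpos : 0 < d := lt_min hl0 (by linarith)
  have hdl : d ≤ l := min_le_left _ _
  have hdl' : d ≤ 1 - l := min_le_right _ _
  have hsmem : l - d ∈ Icc (0:ℝ) 1 := ⟨by linarith, by linarith [hl01.2]⟩
  have humem : l + d ∈ Icc (0:ℝ) 1 := ⟨by linarith [hl01.1], by linarith⟩
  have hmid' := hψmid (l - d) (l + d) hsmem humem
  rw [show ((l - d) + (l + d)) / 2 = l by ring] at hmid'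
  have hgs : ψ t₀ ≤ ψ (l - d) := hmin _ hsmem
  have hgu : ψ t₀ ≤ ψ (l + d) := hmin _ humem
  have h2l : ψ (l - d) + ψ (l + d) ≤ 2 * ψ l := by linarith [hmid']
  have hseq : ψ (l - d) = ψ t₀ := le_antisymm (by linarith [h2l, hgu, hψl]) hgs
  have : l ≤ l - d := hlleast ⟨hsmem, hseq⟩
  linarith

end Stmt2Aux

open Stmt2Aux in
/-- If `f` is measurable, log-concave, and integrable on every
`(z, ∞)`, then `G z = ∫_{(z,∞)} f` is log-concave. -/
theorem stmt_2 (f : ℝ → ℝ) (hmeas : Measurable f)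
    (hnonneg : ∀ x, 0 ≤ f x)
    (hlc : ∀ x y t : ℝ, 0 ≤ t → t ≤ 1 →
      f x ^ (1 - t) * f y ^ t ≤ f ((1 - t) * x + t * y))
    (hint : ∀ z : ℝ, IntegrableOn f (Set.Ioi z)) :
    ∀ x y t : ℝ, 0 ≤ t → t ≤ 1 →
      (∫ s in Set.Ioi x, f s) ^ (1 - t) * (∫ s in Set.Ioi y, f s) ^ t ≤
        ∫ s in Set.Ioi ((1 - t) * x + t * y), f s := by
  have hGnonneg : ∀ z : ℝ, 0 ≤ ∫ s in Ioi z, f s := fun z =>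
    setIntegral_nonneg measurableSet_Ioi fun s _ => hnonneg s
  have hanti : ∀ a b : ℝ, a ≤ b → (∫ s in Ioi b, f s) ≤ ∫ s in Ioi a, f s := by
    intro a b hab
    rw [split_integral hint hab]
    have : 0 ≤ ∫ s in Ioc a b, f s :=
      setIntegral_nonneg measurableSet_Ioc fun s _ => hnonneg s
    linarith
  have hGcont : Continuous (fun z => ∫ s in Ioi z, f s) := by
    have hG_eq : ∀ z : ℝ,
        (∫ s in Ioi z, f s) = (∫ s in Ioi (0:ℝ), f s) - ∫ s in (0:ℝ)..z, f s := by
      intro z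
      rcases le_total (0:ℝ) z with h | h
      · have hs := split_integral hint h
        rw [intervalIntegral.integral_of_le h]
        linarith
      · have hs := split_integral hint h
        rw [intervalIntegral.integral_of_ge h]
        linarith
    have hprim : Continuous (fun z => ∫ s in (0:ℝ)..z, f s) :=
      intervalIntegral.continuous_primitive
        (fun a b => ⟨(hint a).mono_set Ioc_subset_Ioi_self,
          (hint b).mono_set Ioc_subset_Ioi_self⟩) 0
    have : (fun z => ∫ s in Ioi z, f s)
        = fun z => (∫ s in Ioi (0:ℝ), f s) - ∫ s in (0:ℝ)..z, f s := funext hG_eq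
    rw [this]
    exact continuous_const.sub hprim
  -- main ordered statement
  have main : ∀ x y : ℝ, x ≤ y → ∀ t : ℝ, 0 ≤ t → t ≤ 1 →
      (∫ s in Ioi x, f s) ^ (1 - t) * (∫ s in Ioi y, f s) ^ t ≤
        ∫ s in Ioi ((1 - t) * x + t * y), f s := by
    intro x y hxy t ht0 ht1
    rcases eq_or_lt_of_le ht0 with h0 | h0
    · rw [← h0]
      norm_num
    rcases eq_or_lt_of_le ht1 with h1 | h1
    · rw [h1]
      norm_num
    by_cases hGy : (∫ s in Ioi y, f s) = 0
    · rw [hGy, Real.zero_rpow (ne_of_gt h0), mul_zero]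
      exact hGnonneg _
    have hGypos : 0 < ∫ s in Ioi y, f s :=
      lt_of_le_of_ne (hGnonneg y) (Ne.symm hGy)
    have hGpos : ∀ r ∈ Icc x y, 0 < ∫ s in Ioi r, f s := fun r hr =>
      lt_of_lt_of_le hGypos (hanti r y hr.2)
    set φ : ℝ → ℝ := fun r => Real.log (∫ s in Ioi r, f s) with hφ
    have hφcont : ContinuousOn φ (Icc x y) := by
      apply ContinuousOn.comp Real.continuousOn_log hGcont.continuousOn
      intro r hr
      exact (hGpos r hr).ne'
    have hφmid : ∀ a b, a ∈ Icc x y → b ∈ Icc x y →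
        (φ a + φ b) / 2 ≤ φ ((a + b) / 2) := by
      intro a b ha hb
      have hmmem : (a + b) / 2 ∈ Icc x y :=
        ⟨by linarith [ha.1, hb.1], by linarith [ha.2, hb.2]⟩
      have hpa := hGpos a ha
      have hpb := hGpos b hb
      have hpm := hGpos _ hmmem
      rcases le_total a b with hab | hab
      · have h2 := midpoint_ineq hnonneg hlc hint hab
        have h3 := Real.log_le_log (by positivity) h2
        rw [Real.log_mul hpa.ne' hpb.ne', Real.log_pow] at h3
        simp only [hφ]
        push_cast at h3
        linarith
      · have h2 := midpoint_ineq hnonneg hlc hint hab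
        rw [show (b + a) / 2 = (a + b) / 2 by ring] at h2
        have h3 := Real.log_le_log (by positivity) h2
        rw [Real.log_mul hpb.ne' hpa.ne', Real.log_pow] at h3
        simp only [hφ]
        push_cast at h3
        linarith
    have hconc := concave_of_midpoint hxy hφcont hφmid ht0 ht1
    have hzmem : (1 - t) * x + t * y ∈ Icc x y :=
      ⟨by nlinarith, by nlinarith⟩
    have hGz := hGpos _ hzmem
    have hGx := hGpos x ⟨le_refl x, hxy⟩
    rw [Real.rpow_def_of_pos hGx, Real.rpow_def_of_pos hGypos, ← Real.exp_add,
      ← Real.exp_log hGz]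
    apply Real.exp_le_exp.mpr
    simp only [hφ] at hconc
    linarith
  intro x y t ht0 ht1
  rcases le_total x y with hxy | hyx
  · exact main x y hxy t ht0 ht1
  · have h := main y x hyx (1 - t) (by linarith) (by linarith)
    rw [show (1:ℝ) - (1 - t) = t by ring] at h
    rw [show t * y + (1 - t) * x = (1 - t) * x + t * y by ring] at h
    rw [mul_comm]
    exact h
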